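/- arXiv:2311.17617 — 2 statements merged into one kernel-verified Lean document; each statement's English description precedes it below -/
import Mathlib

section
/- Let Γ₁,...,Γ_N be positive reals, κ₁,...,κ_N ≥ 0, and Γ'_i = (1+κ_i²)Γ_i. Then the CSI-assisted AF SNDR Γ^V = (∏_{i=1}^N (1+Γ'_i)/∏_{i=1}^N Γ_i − 1)^{-1} is positive and satisfies Γ^V ≤ 1/(∏_{i=1}^N (1+κ_i²) − 1) whenever the latter product exceeds 1. -/
open Finset

/-- The CSI-assisted AF SNDR Γ^V = (∏(1+Γ'_i)/∏Γ_i − 1)⁻¹ with Γ'_i = (1+κ_i²)Γ_i is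
positive, and Γ^V ≤ 1/(∏(1+κ_i²) − 1) whenever ∏(1+κ_i²) > 1. -/
theorem stmt_3 (N : ℕ) (hN : 1 ≤ N) (Γ κ : Fin N → ℝ) (hΓ : ∀ i, 0 < Γ i) (hκ : ∀ i, 0 ≤ κ i) :
    0 < ((∏ i : Fin N, (1 + (1 + κ i ^ 2) * Γ i)) / (∏ i : Fin N, Γ i) - 1)⁻¹ ∧
      ((1 : ℝ) < ∏ i : Fin N, (1 + κ i ^ 2) →
        ((∏ i : Fin N, (1 + (1 + κ i ^ 2) * Γ i)) / (∏ i : Fin N, Γ i) - 1)⁻¹ ≤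
          1 / ((∏ i : Fin N, (1 + κ i ^ 2)) - 1)) := by
  have hQ : 0 < ∏ i : Fin N, Γ i := Finset.prod_pos fun i _ => hΓ i
  have hne : (Finset.univ : Finset (Fin N)).Nonempty := by
    simpa [Finset.univ_nonempty_iff] using Fin.pos_iff_nonempty.mp hN
  have hPQ : ∏ i : Fin N, Γ i < ∏ i : Fin N, (1 + (1 + κ i ^ 2) * Γ i) := by
    apply Finset.prod_lt_prod_of_nonempty (fun i _ => hΓ i) _ hne
    intro i _
    have hκi : (1 : ℝ) ≤ 1 + κ i ^ 2 := by nlinarith [sq_nonneg (κ i)]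
    nlinarith [hΓ i]
  have hgt : 1 < (∏ i : Fin N, (1 + (1 + κ i ^ 2) * Γ i)) / (∏ i : Fin N, Γ i) :=
    (one_lt_div hQ).mpr hPQ
  have hpos : 0 < (∏ i : Fin N, (1 + (1 + κ i ^ 2) * Γ i)) / (∏ i : Fin N, Γ i) - 1 := by
    linarith
  refine ⟨inv_pos.mpr hpos, fun hK => ?_⟩
  have hK' : 0 < (∏ i : Fin N, (1 + κ i ^ 2)) - 1 := by linarith
  rw [one_div]
  apply inv_anti₀ hK'
  have key : (∏ i : Fin N, (1 + κ i ^ 2)) * ∏ i : Fin N, Γ i ≤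
      ∏ i : Fin N, (1 + (1 + κ i ^ 2) * Γ i) := by
    rw [← Finset.prod_mul_distrib]
    apply Finset.prod_le_prod
    · intro i _
      have : (0:ℝ) ≤ 1 + κ i ^ 2 := by nlinarith [sq_nonneg (κ i)]
      exact mul_nonneg this (hΓ i).le
    · intro i _; linarith
  have : (∏ i : Fin N, (1 + κ i ^ 2)) ≤
      (∏ i : Fin N, (1 + (1 + κ i ^ 2) * Γ i)) / (∏ i : Fin N, Γ i) :=
    (le_div_iff₀ hQ).mpr key
  linarith
end

section
/- For positive reals Γ₁,...,Γ_N, constants d₁ ≥ 0, λ_i ≥ 1, C_{R_i} > 0 with λ_{N+1} = 1 and C_{R_0} = 1, the N-hop FG AF SNDR Γ^F = (d₁ + ∑_{i=1}^N λ_{i+1} ∏_{j=1}^i C_{R_{j−1}}/Γ_j)^{-1} satisfies the recursion Γ^F_{n,...,N} = (d_n + λ_{n,n+1}/Γ_n + C_{R_n}/(Γ_n Γ^F_{n+1,...,N}))^{-1} for 1 ≤ n ≤ N−2, where λ_{n,n+1} = λ_{n+1} + C_{R_n}(1 − λ_{n+1}), d_n = λ_n − 1, Γ^F_{n+1,...,N}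 = (d_{n+1} + ∑_{i=n+1}^N λ_{i+1} ∏_{j=n+2}^i C_{R_{j−1}} / ∏_{j=n+1}^i Γ_j)^{-1}. -/
open Finset

/-- Recursion for the N-hop FG AF SNDR: with λ_i = ∏_{j=i}^N (1+κ_j²), d_i = λ_i − 1,
C_{R_0} = 1, and Γ^F_{n,...,N} = (d_n + ∑_{i=n}^N λ_{i+1} (∏_{j=n+1}^i C_{R_{j−1}})
/ (∏_{j=n}^i Γ_j))⁻¹, one has, for 1 ≤ n ≤ N−2,
Γ^F_{n,...,N} = (d_n + λ_{n,n+1}/Γ_n + C_{R_n}/(Γ_n Γ^F_{n+1,...,N}))⁻¹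
with λ_{n,n+1} = λ_{n+1} + C_{R_n}(1 − λ_{n+1}). -/
theorem stmt_14 (N : ℕ) (κ Γ C : ℕ → ℝ)
    (hκ : ∀ j, 0 ≤ κ j) (hΓ : ∀ j, 0 < Γ j) (hC : ∀ j, 0 < C j) (hC0 : C 0 = 1)
    (lam : ℕ → ℝ) (hlam : ∀ i, lam i = ∏ j ∈ Finset.Icc i N, (1 + κ j ^ 2))
    (d : ℕ → ℝ) (hd : ∀ i, d i = lam i - 1)
    (GF : ℕ → ℝ)
    (hGF : ∀ n, GF n =
      (d n + ∑ i ∈ Finset.Icc n N, lam (i + 1) *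
          (∏ j ∈ Finset.Icc (n + 1) i, C (j - 1)) / (∏ j ∈ Finset.Icc n i, Γ j))⁻¹)
    (n : ℕ) (hn1 : 1 ≤ n) (hn2 : n ≤ N - 2) :
    GF n = (d n + (lam (n + 1) + C n * (1 - lam (n + 1))) / Γ n +
        C n / (Γ n * GF (n + 1)))⁻¹ := by
  have hN : n + 2 ≤ N := by omega
  rw [hGF n, hGF (n + 1)]
  have hins : Finset.Icc n N = insert n (Finset.Icc (n + 1) N) := by
    ext x; simp only [Finset.mem_Icc, Finset.mem_insert]; omega
  have hnotmem : n ∉ Finset.Icc (n + 1) N := by simp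
  rw [hins, Finset.sum_insert hnotmem]
  have hterm : lam (n + 1) * (∏ j ∈ Finset.Icc (n + 1) n, C (j - 1)) /
      (∏ j ∈ Finset.Icc n n, Γ j) = lam (n + 1) / Γ n := by
    rw [Finset.Icc_self, Finset.Icc_eq_empty (by omega)]
    simp
  rw [hterm]
  have hsum : ∑ i ∈ Finset.Icc (n + 1) N,
      lam (i + 1) * (∏ j ∈ Finset.Icc (n + 1) i, C (j - 1)) /
        (∏ j ∈ Finset.Icc n i, Γ j)
      = (C n / Γ n) * ∑ i ∈ Finset.Icc (n + 1) N,
          lam (i + 1) * (∏ j ∈ Finset.Icc (n + 2) i, C (j - 1)) /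
            (∏ j ∈ Finset.Icc (n + 1) i, Γ j) := by
    rw [Finset.mul_sum]
    refine Finset.sum_congr rfl ?_
    intro i hi
    have hi' : n + 1 ≤ i := (Finset.mem_Icc.mp hi).1
    have hC' : ∏ j ∈ Finset.Icc (n + 1) i, C (j - 1)
        = C n * ∏ j ∈ Finset.Icc (n + 2) i, C (j - 1) := by
      have : Finset.Icc (n + 1) i = insert (n + 1) (Finset.Icc (n + 2) i) := by
        ext x; simp only [Finset.mem_Icc, Finset.mem_insert]; omega
      rw [this, Finset.prod_insert (by simp)]
      norm_num
    have hΓ' : ∏ j ∈ Finset.Icc n i, Γ j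
        = Γ n * ∏ j ∈ Finset.Icc (n + 1) i, Γ j := by
      have : Finset.Icc n i = insert n (Finset.Icc (n + 1) i) := by
        ext x; simp only [Finset.mem_Icc, Finset.mem_insert]; omega
      rw [this, Finset.prod_insert (by simp)]
    rw [hC', hΓ']
    rw [div_eq_mul_inv, div_eq_mul_inv, div_eq_mul_inv, mul_inv]
    ring
  rw [hsum, hd (n + 1)]
  simp only [div_eq_mul_inv, mul_inv, inv_inv]
  congr 1
  ring
end
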